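/- arXiv:1508.04709 — 3 statements merged into one kernel-verified Lean document; each statement's English description precedes it below -/
import Mathlib

section
/- Both eigenvalues of the Hessian of G₁ at any nonzero m ∈ ℝ² are strictly less than 2α₁(q−p)/(pq). In particular, for any χ₁ ≥ 2α₁(q−p)/(pq), the function m ↦ G₁(m) − (χ₁/2)|m|² is concave on ℝ². -/
set_option maxHeartbeats 1000000 in
/-- Both eigenvalues of the Hessian of G₁ at nonzero m are < 2α₁(q−p)/(pq);
consequently, for χ₁ ≥ 2α₁(q−p)/(pq), m ↦ G₁(m) − (χ₁/2)|m|² is concave. -/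
theorem stmt_4 (α₁ p q : ℝ) (hα : 0 < α₁) (hp : 0 < p) (hpq : p < q) :
    (∀ m : EuclideanSpace ℝ (Fin 2), m ≠ 0 →
      ∀ μ : ℝ, (∃ v : Fin 2 → ℝ, v ≠ 0 ∧
          ((-(α₁ * (q - p) / ((p + ‖m‖) * (q + ‖m‖)))) • (1 : Matrix (Fin 2) (Fin 2) ℝ) +
            (α₁ * (1 / (p + ‖m‖) ^ 2 - 1 / (q + ‖m‖) ^ 2) / ‖m‖) •
              Matrix.vecMulVec (fun i => m i) (fun i => m i)).mulVec v = μ • v) →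
        μ < 2 * α₁ * (q - p) / (p * q)) ∧
    (∀ χ₁ : ℝ, 2 * α₁ * (q - p) / (p * q) ≤ χ₁ →
      ConcaveOn ℝ Set.univ (fun m : EuclideanSpace ℝ (Fin 2) =>
        α₁ * (p * Real.log (p + ‖m‖) - q * Real.log (q + ‖m‖)) - χ₁ / 2 * ‖m‖ ^ 2)) := by
  constructor
  ·
    have hq : 0 < q := hp.trans hpq
    intro m hm μ ⟨v, hv0, hv⟩
    set r := ‖m‖ with hrdef
    have hr : 0 < r := norm_pos_iff.2 hm
    have hr2 : r ^ 2 = m 0 ^ 2 + m 1 ^ 2 := by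
      rw [hrdef, EuclideanSpace.norm_eq, Real.sq_sqrt (by positivity)]
      simp [Fin.sum_univ_two, sq_abs]
    set a := -(α₁ * (q - p) / ((p + r) * (q + r))) with hadef
    set b := α₁ * (1 / (p + r) ^ 2 - 1 / (q + r) ^ 2) / r with hbdef
    clear_value a b
    have hpr : 0 < p + r := by linarith
    have hqr : 0 < q + r := by linarith
    have hb : 0 < b := by
      rw [hbdef]
      apply div_pos _ hr
      apply mul_pos hα
      rw [sub_pos]
      apply div_lt_div_of_pos_left one_pos (by positivity)
      have : p + r < q + r := by linarith
      nlinarith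
    have h0 := congrFun hv 0
    have h1 := congrFun hv 1
    simp only [Matrix.mulVec, Matrix.vecMulVec_apply, dotProduct, Fin.sum_univ_two,
      Matrix.one_apply, Matrix.add_apply, Matrix.smul_apply, smul_eq_mul, Pi.smul_apply,
      if_true, if_neg, eq_self_iff_true, Fin.ext_iff] at h0 h1
    norm_num at h0 h1
    have hS : 0 < v 0 ^ 2 + v 1 ^ 2 := by
      rcases Function.ne_iff.1 hv0 with ⟨i, hi⟩
      fin_cases i <;> simp at hi <;> positivity
    -- quadratic form identity
    have key : μ * (v 0 ^ 2 + v 1 ^ 2) = a * (v 0 ^ 2 + v 1 ^ 2) + b * (m 0 * v 0 + m 1 * v 1) ^ 2 := by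
      linear_combination (-(v 0)) * h0 - (v 1) * h1
    have cs : (m 0 * v 0 + m 1 * v 1) ^ 2 ≤ r ^ 2 * (v 0 ^ 2 + v 1 ^ 2) := by
      rw [hr2]; nlinarith [sq_nonneg (m 0 * v 1 - m 1 * v 0)]
    have hle : μ ≤ a + b * r ^ 2 := by
      nlinarith [mul_le_mul_of_nonneg_left cs hb.le]
    have heq : a + b * r ^ 2 = α₁ * (q - p) * (r ^ 2 - p * q) / ((p + r) ^ 2 * (q + r) ^ 2) := by
      rw [hadef, hbdef]; field_simp; ring
    refine hle.trans_lt ?_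
    rw [heq, div_lt_div_iff₀ (by positivity) (by positivity)]
    have hscal : (r ^ 2 - p * q) * (p * q) < 2 * ((p + r) ^ 2 * (q + r) ^ 2) := by
      have e1 : p * q + r ^ 2 ≤ (p + r) * (q + r) := by nlinarith [mul_pos hp hr, mul_pos hq hr]
      have e2 : (p * q + r ^ 2) ^ 2 ≤ ((p + r) * (q + r)) ^ 2 :=
        pow_le_pow_left₀ (by positivity) e1 2
      have e3 : (r ^ 2 - p * q) * (p * q) < 2 * (p * q + r ^ 2) ^ 2 := by
        nlinarith [mul_pos hp hq, sq_nonneg r, mul_pos (mul_pos hp hq) (mul_pos hr hr)]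
      have e4 : 2 * ((p + r) ^ 2 * (q + r) ^ 2) = 2 * ((p + r) * (q + r)) ^ 2 := by ring
      linarith
    have hmul := mul_lt_mul_of_pos_left hscal (mul_pos hα (sub_pos.2 hpq))
    nlinarith [hmul]
  ·
    have hq : 0 < q := hp.trans hpq
    intro χ₁ hχ
    have hχ0 : 0 ≤ χ₁ := le_trans (div_nonneg (by nlinarith) (by positivity)) hχ
    set h : ℝ → ℝ := fun t => α₁ * (p * Real.log (p + t) - q * Real.log (q + t)) - χ₁ / 2 * t ^ 2
      with hhdef
    set h1 : ℝ → ℝ := fun t => α₁ * (p * (1 / (p + t)) - q * (1 / (q + t))) - χ₁ * t with h1def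
    -- derivative facts
    have hd : ∀ t : ℝ, 0 ≤ t → HasDerivAt h (h1 t) t := by
      intro t ht
      have hpt : p + t ≠ 0 := by positivity
      have hqt : q + t ≠ 0 := by positivity
      have l1 : HasDerivAt (fun s : ℝ => Real.log (p + s)) (1 / (p + t)) t := by
        simpa using (HasDerivAt.log ((hasDerivAt_id t).const_add p) hpt)
      have l2 : HasDerivAt (fun s : ℝ => Real.log (q + s)) (1 / (q + t)) t := by
        simpa using (HasDerivAt.log ((hasDerivAt_id t).const_add q) hqt)
      have l3 : HasDerivAt (fun s : ℝ => χ₁ / 2 * s ^ 2) (χ₁ * t) t := by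
        have := (hasDerivAt_pow 2 t).const_mul (χ₁ / 2)
        simpa using this.congr_deriv (by ring)
      exact (((l1.const_mul p).sub (l2.const_mul q)).const_mul α₁).sub l3
    have hd2 : ∀ t : ℝ, 0 ≤ t →
        HasDerivAt h1 (α₁ * (q * (1 / (q + t) ^ 2) - p * (1 / (p + t) ^ 2)) - χ₁) t := by
      intro t ht
      have hpt : p + t ≠ 0 := by positivity
      have hqt : q + t ≠ 0 := by positivity
      have l1 : HasDerivAt (fun s : ℝ => 1 / (p + s)) (-(1 / (p + t) ^ 2)) t := by
        have := ((hasDerivAt_const t (1:ℝ)).div ((hasDerivAt_id t).const_add p) hpt)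
        exact this.congr_deriv (g' := -(1 / (p + t) ^ 2)) (by simp only [id]; ring)
      have l2 : HasDerivAt (fun s : ℝ => 1 / (q + s)) (-(1 / (q + t) ^ 2)) t := by
        have := ((hasDerivAt_const t (1:ℝ)).div ((hasDerivAt_id t).const_add q) hqt)
        exact this.congr_deriv (g' := -(1 / (q + t) ^ 2)) (by simp only [id]; ring)
      have l3 : HasDerivAt (fun s : ℝ => χ₁ * s) χ₁ t := by
        simpa using (hasDerivAt_id t).const_mul χ₁
      have := (((l1.const_mul p).sub (l2.const_mul q)).const_mul α₁).sub l3
      exact this.congr_deriv (by ring)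
    -- h1 ≤ 0 on [0,∞)
    have h1np : ∀ t : ℝ, 0 ≤ t → h1 t ≤ 0 := by
      intro t ht
      have hpt : 0 < p + t := by linarith
      have hqt : 0 < q + t := by linarith
      have e1 : p * (1 / (p + t)) - q * (1 / (q + t)) ≤ 0 := by
        rw [sub_nonpos, mul_one_div, mul_one_div, div_le_div_iff₀ hpt hqt]
        nlinarith
      have : α₁ * (p * (1 / (p + t)) - q * (1 / (q + t))) ≤ 0 :=
        mul_nonpos_of_nonneg_of_nonpos hα.le e1
      have : χ₁ * t ≥ 0 := mul_nonneg hχ0 ht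
      simp only [h1def]
      linarith [mul_nonpos_of_nonneg_of_nonpos hα.le e1]
    -- second derivative ≤ 0 on (0,∞)
    have h2np : ∀ t : ℝ, 0 ≤ t → α₁ * (q * (1 / (q + t) ^ 2) - p * (1 / (p + t) ^ 2)) - χ₁ ≤ 0 := by
      intro t ht
      have hpt : 0 < p + t := by linarith
      have hqt : 0 < q + t := by linarith
      have key : α₁ * (q * (1 / (q + t) ^ 2) - p * (1 / (p + t) ^ 2)) =
          α₁ * (q - p) * (t ^ 2 - p * q) / ((p + t) ^ 2 * (q + t) ^ 2) := by
        field_simp; ring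
      have hb : α₁ * (q - p) * (t ^ 2 - p * q) / ((p + t) ^ 2 * (q + t) ^ 2) ≤
          2 * α₁ * (q - p) / (p * q) := by
        rw [div_le_div_iff₀ (by positivity) (by positivity)]
        have e1 : p * q + t ^ 2 ≤ (p + t) * (q + t) := by nlinarith [mul_nonneg hp.le ht, mul_nonneg hq.le ht]
        have e2 : (p * q + t ^ 2) ^ 2 ≤ ((p + t) * (q + t)) ^ 2 :=
          pow_le_pow_left₀ (by positivity) e1 2
        have e3 : (t ^ 2 - p * q) * (p * q) ≤ 2 * (p * q + t ^ 2) ^ 2 := by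
          nlinarith [mul_pos hp hq, sq_nonneg t, mul_nonneg (mul_pos hp hq).le (sq_nonneg t)]
        have e4 : 2 * ((p + t) ^ 2 * (q + t) ^ 2) = 2 * ((p + t) * (q + t)) ^ 2 := by ring
        have hscal : (t ^ 2 - p * q) * (p * q) ≤ 2 * ((p + t) ^ 2 * (q + t) ^ 2) := by linarith
        have hmul := mul_le_mul_of_nonneg_left hscal (mul_nonneg hα.le (by linarith : (0:ℝ) ≤ q - p))
        nlinarith [hmul]
      rw [key]
      linarith [hb.trans hχ]
    -- h concave on [0,∞)
    have hconc : ConcaveOn ℝ (Set.Ici (0:ℝ)) h := by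
      apply concaveOn_of_hasDerivWithinAt2_nonpos (convex_Ici 0)
        (f' := h1) (f'' := fun t => α₁ * (q * (1 / (q + t) ^ 2) - p * (1 / (p + t) ^ 2)) - χ₁)
      · exact fun t ht => (hd t ht).continuousAt.continuousWithinAt
      · intro t ht
        rw [interior_Ici] at ht
        exact (hd t (le_of_lt ht)).hasDerivWithinAt
      · intro t ht
        rw [interior_Ici] at ht
        exact (hd2 t (le_of_lt ht)).hasDerivWithinAt
      · intro t ht
        rw [interior_Ici] at ht
        exact h2np t (le_of_lt ht)
    -- h antitone on [0,∞)
    have hanti : AntitoneOn h (Set.Ici (0:ℝ)) := by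
      apply antitoneOn_of_hasDerivWithinAt_nonpos (convex_Ici 0) (f' := h1)
      · exact fun t ht => (hd t ht).continuousAt.continuousWithinAt
      · intro t ht
        rw [interior_Ici] at ht
        exact (hd t (le_of_lt ht)).hasDerivWithinAt
      · intro t ht
        rw [interior_Ici] at ht
        exact h1np t (le_of_lt ht)
    -- compose
    refine ⟨convex_univ, ?_⟩
    intro x _ y _ a b ha hb hab
    simp only [smul_eq_mul]
    have hx0 : ‖x‖ ∈ Set.Ici (0:ℝ) := norm_nonneg x
    have hy0 : ‖y‖ ∈ Set.Ici (0:ℝ) := norm_nonneg y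
    have step1 : a * h ‖x‖ + b * h ‖y‖ ≤ h (a * ‖x‖ + b * ‖y‖) := by
      have := hconc.2 hx0 hy0 ha hb hab
      simpa using this
    have hnorm : ‖a • x + b • y‖ ≤ a * ‖x‖ + b * ‖y‖ := by
      calc ‖a • x + b • y‖ ≤ ‖a • x‖ + ‖b • y‖ := norm_add_le _ _
      _ = a * ‖x‖ + b * ‖y‖ := by
          simp [norm_smul, Real.norm_eq_abs, abs_of_nonneg ha, abs_of_nonneg hb]
    have step2 : h (a * ‖x‖ + b * ‖y‖) ≤ h ‖a • x + b • y‖ :=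
      hanti (Set.mem_Ici.2 (norm_nonneg _)) (Set.mem_Ici.2 (by positivity)) hnorm
    calc a * h ‖x‖ + b * h ‖y‖ ≤ h ‖a • x + b • y‖ := step1.trans step2
    _ = _ := rfl
end

section
/- Both eigenvalues of the Hessian of G₂ at any nonzero m ∈ ℝ² are strictly negative; in particular G₂ is concave on ℝ². -/
open Real Set

/-- Concavity of the radial profile of `G₂` on `[0, ∞)`. -/
lemma stmt_5_gconc (α₂ p q : ℝ) (hα : 0 < α₂) (hp : 0 < p) (hpq : p < q) :
    ConcaveOn ℝ (Set.Ici 0) (fun t : ℝ =>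
      α₂ * (-(p * t / (p + q)) + p ^ 2 * q / (p + q) ^ 2 * Real.log (p * q / (p + q) + t))) := by
  have hq : 0 < q := hp.trans hpq
  have hpq' : 0 < p + q := by linarith
  have hc : 0 < p * q / (p + q) := by positivity
  refine ⟨convex_Ici 0, fun x hx y hy a b ha hb hab => ?_⟩
  have hx' : (0:ℝ) ≤ x := hx
  have hy' : (0:ℝ) ≤ y := hy
  have hlog := strictConcaveOn_log_Ioi.concaveOn.2 (show p*q/(p+q) + x ∈ Ioi (0:ℝ) by simp; linarith)
    (show p*q/(p+q) + y ∈ Ioi (0:ℝ) by simp; linarith) ha hb hab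
  simp only [smul_eq_mul] at hlog ⊢
  have key : a * (p*q/(p+q) + x) + b * (p*q/(p+q) + y) = p*q/(p+q) + (a*x + b*y) := by
    have : a * (p*q/(p+q)) + b * (p*q/(p+q)) = p*q/(p+q) := by
      rw [← add_mul, hab, one_mul]
    linarith [this]
  rw [key] at hlog
  have hk : (0:ℝ) ≤ α₂ * (p ^ 2 * q / (p + q) ^ 2) := by positivity
  have h := mul_le_mul_of_nonneg_left hlog hk
  have hlin : a * (α₂ * (-(p * x / (p + q)))) + b * (α₂ * (-(p * y / (p + q))))
      = α₂ * (-(p * (a*x+b*y) / (p + q))) := by field_simp; ring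
  nlinarith [h, hlin]

/-- The radial profile of `G₂` is nonincreasing on `[0, ∞)`. -/
lemma stmt_5_ganti (α₂ p q : ℝ) (hα : 0 < α₂) (hp : 0 < p) (hpq : p < q) :
    AntitoneOn (fun t : ℝ =>
      α₂ * (-(p * t / (p + q)) + p ^ 2 * q / (p + q) ^ 2 * Real.log (p * q / (p + q) + t)))
      (Set.Ici 0) := by
  have hq : 0 < q := hp.trans hpq
  have hpq' : 0 < p + q := by linarith
  have hc : 0 < p * q / (p + q) := by positivity
  intro s hs t ht hst
  have hs' : (0:ℝ) ≤ s := hs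
  simp only
  have h1 : Real.log (p*q/(p+q) + t) - Real.log (p*q/(p+q) + s) ≤ (t - s) / (p*q/(p+q) + s) := by
    rw [← Real.log_div (by linarith) (by linarith)]
    have h0 := Real.log_le_sub_one_of_pos
      (show 0 < (p*q/(p+q) + t)/(p*q/(p+q) + s) by apply div_pos <;> linarith)
    calc Real.log ((p*q/(p+q) + t)/(p*q/(p+q) + s)) ≤ (p*q/(p+q) + t)/(p*q/(p+q) + s) - 1 := h0
      _ = (t - s) / (p*q/(p+q) + s) := by field_simp; ring
  have h2 : (t - s) / (p*q/(p+q) + s) ≤ (t - s) / (p*q/(p+q)) :=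
    div_le_div_of_nonneg_left (by linarith) hc (by linarith)
  have h3 : p^2*q/(p+q)^2 * ((t-s)/(p*q/(p+q))) = p*(t-s)/(p+q) := by field_simp
  have h4 : p^2*q/(p+q)^2 * (Real.log (p*q/(p+q) + t) - Real.log (p*q/(p+q) + s))
      ≤ p*(t-s)/(p+q) := by
    rw [← h3]; exact mul_le_mul_of_nonneg_left (h1.trans h2) (by positivity)
  have h5 := mul_le_mul_of_nonneg_left h4 hα.le
  ring_nf at h5 ⊢
  linarith [h5]

/-- Both eigenvalues of the Hessian of G₂ at nonzero m are < 0; in particular G₂ is concave. -/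
theorem stmt_5 (α₂ p q : ℝ) (hα : 0 < α₂) (hp : 0 < p) (hpq : p < q) :
    (∀ m : EuclideanSpace ℝ (Fin 2), m ≠ 0 →
      ∀ μ : ℝ, (∃ v : Fin 2 → ℝ, v ≠ 0 ∧
          ((-(α₂ * p / (p * q + (p + q) * ‖m‖))) • (1 : Matrix (Fin 2) (Fin 2) ℝ) +
            (α₂ * p * (p + q) / (p * q + (p + q) * ‖m‖) ^ 2 / ‖m‖) •
              Matrix.vecMulVec (fun i => m i) (fun i => m i)).mulVec v = μ • v) →
        μ < 0) ∧
    ConcaveOn ℝ Set.univ (fun m : EuclideanSpace ℝ (Fin 2) =>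
      α₂ * (-(p * ‖m‖ / (p + q)) +
        p ^ 2 * q / (p + q) ^ 2 * Real.log (p * q / (p + q) + ‖m‖))) := by
  have hq : 0 < q := hp.trans hpq
  constructor
  · rintro m hm μ ⟨v, hv, heq⟩
    have h0 := congrFun heq 0
    have h1 := congrFun heq 1
    simp [Matrix.add_mulVec, Matrix.smul_mulVec, Matrix.one_mulVec, Matrix.mulVec,
      Matrix.vecMulVec_apply, dotProduct, Fin.sum_univ_two] at h0 h1
    have hm' : 0 < ‖m‖ := norm_pos_iff.mpr hm
    have hn2 : m 0 * m 0 + m 1 * m 1 = ‖m‖ ^ 2 := by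
      rw [EuclideanSpace.norm_eq, Real.sq_sqrt (by positivity)]
      simp [Fin.sum_univ_two, Real.norm_eq_abs, sq_abs]
      ring
    set n := ‖m‖ with hn
    set D := p * q + (p + q) * n with hD
    have hD0 : 0 < D := by rw [hD]; positivity
    set b := α₂ * p * (p + q) / D ^ 2 / n with hb
    have hb0 : 0 < b := by rw [hb]; positivity
    set S := m 0 * v 0 + m 1 * v 1 with hS_def
    by_cases hS : S = 0
    · have hvi : v 0 ≠ 0 ∨ v 1 ≠ 0 := by
        by_contra hcon
        push_neg at hcon
        exact hv (funext fun i => by fin_cases i <;> simp [hcon.1, hcon.2])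
      have hμ : μ = -(α₂ * p / D) := by
        rcases hvi with h | h
        · have e : μ * v 0 = -(α₂ * p / D) * v 0 := by linear_combination -h0 + (b * m 0) * hS
          exact mul_right_cancel₀ h e
        · have e : μ * v 1 = -(α₂ * p / D) * v 1 := by linear_combination -h1 + (b * m 1) * hS
          exact mul_right_cancel₀ h e
      rw [hμ]
      have : 0 < α₂ * p / D := by positivity
      linarith
    · have E : μ * S = (-(α₂ * p / D) + b * n ^ 2) * S := by
        linear_combination -(m 0 * h0) - m 1 * h1 + (b * S) * hn2
      have hμ : μ = -(α₂ * p / D) + b * n ^ 2 := mul_right_cancel₀ hS E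
      have key : -(α₂ * p / D) + b * n ^ 2 = -(α₂ * p ^ 2 * q) / D ^ 2 := by
        rw [hb, hD]
        field_simp
        ring
      rw [hμ, key]
      apply div_neg_of_neg_of_pos
      · have : 0 < α₂ * p ^ 2 * q := by positivity
        linarith
      · positivity
  · refine ⟨convex_univ, fun x _ y _ a b ha hb hab => ?_⟩
    have hnorm : ‖a • x + b • y‖ ≤ a * ‖x‖ + b * ‖y‖ := by
      refine (norm_add_le _ _).trans ?_
      rw [norm_smul, norm_smul, Real.norm_eq_abs, Real.norm_eq_abs,
        abs_of_nonneg ha, abs_of_nonneg hb]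
    have hmem : a * ‖x‖ + b * ‖y‖ ∈ Set.Ici (0:ℝ) := by
      simp only [Set.mem_Ici]; positivity
    have h1 := stmt_5_ganti α₂ p q hα hp hpq (Set.mem_Ici.mpr (norm_nonneg _)) hmem hnorm
    have h2 := (stmt_5_gconc α₂ p q hα hp hpq).2 (Set.mem_Ici.mpr (norm_nonneg x))
      (Set.mem_Ici.mpr (norm_nonneg y)) ha hb hab
    simp only [smul_eq_mul] at h2 ⊢
    exact h2.trans h1
end

section
/- For every nonzero m ∈ ℝ² and any χ₃ ≥ α₃/(q−p)², both eigenvalues of the Hessian of G₃(m) − (χ₃/2)|m|² at m are ≤ 0; i.e., the Hessian −α₃/((q−p)|m|+|m|²) I + α₃(q−p+2|m|)/((q−p)|m|+|m|²)² · (m⊗m)/|m| − χ₃ I is negative semi-definite. -/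
open Matrix

/-- For nonzero m and χ₃ ≥ α₃/(q−p)², the Hessian of G₃(m) − (χ₃/2)|m|², namely
H = −α₃/((q−p)|m|+|m|²) I + α₃(q−p+2|m|)/((q−p)|m|+|m|²)² (m⊗m)/|m| − χ₃ I,
is negative semi-definite, i.e. −H is positive semi-definite (equivalently, both
eigenvalues of H are ≤ 0). -/
theorem stmt_12 (α₃ p q χ₃ : ℝ) (hα : 0 < α₃) (hp : 0 < p) (hpq : p < q)
    (hχ : α₃ / (q - p) ^ 2 ≤ χ₃) :
    ∀ m : EuclideanSpace ℝ (Fin 2), m ≠ 0 →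
      Matrix.PosSemidef
        (-((-(α₃ / ((q - p) * ‖m‖ + ‖m‖ ^ 2))) • (1 : Matrix (Fin 2) (Fin 2) ℝ) +
            (α₃ * (q - p + 2 * ‖m‖) / ((q - p) * ‖m‖ + ‖m‖ ^ 2) ^ 2 / ‖m‖) •
              Matrix.vecMulVec (fun i => m i) (fun i => m i) -
            χ₃ • (1 : Matrix (Fin 2) (Fin 2) ℝ))) := by
  intro m hm
  have hr0 : 0 < ‖m‖ := norm_pos_iff.mpr hm
  set r := ‖m‖ with hrdef
  have hs : 0 < q - p := sub_pos.mpr hpq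
  set s := q - p with hsdef
  set D := s * r + r ^ 2 with hD
  have hD0 : 0 < D := by positivity
  set a := α₃ with ha
  set c := a * (s + 2 * r) / D ^ 2 / r with hc
  have hc0 : 0 ≤ c := by positivity
  set t := a / D + χ₃ with ht
  have key : -((-(a / D)) • (1 : Matrix (Fin 2) (Fin 2) ℝ) +
      c • Matrix.vecMulVec (fun i => m i) (fun i => m i) - χ₃ • 1)
      = t • (1 : Matrix (Fin 2) (Fin 2) ℝ)
        - c • Matrix.vecMulVec (fun i => m i) (fun i => m i) := by
    rw [ht, add_smul]; module
  rw [key]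
  -- norm squared
  have hr2 : m 0 ^ 2 + m 1 ^ 2 = r ^ 2 := by
    have := EuclideanSpace.norm_eq m
    rw [Fin.sum_univ_two] at this
    rw [hrdef, this, Real.sq_sqrt (by positivity)]
    simp [Real.norm_eq_abs, sq_abs]
  -- key scalar inequality
  have heq : c * r ^ 2 = a / D + a / (s + r) ^ 2 := by
    rw [hc, hD]
    field_simp
    ring
  have h2 : a / (s + r) ^ 2 ≤ a / s ^ 2 := by
    gcongr <;> nlinarith
  have hkey : c * r ^ 2 ≤ t := by
    rw [ht, heq]
    have : a / s ^ 2 ≤ χ₃ := hχ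
    linarith
  refine Matrix.posSemidef_iff_dotProduct_mulVec.mpr ⟨?_, ?_⟩
  · show _ = _
    ext i j
    fin_cases i <;> fin_cases j <;>
      simp [Matrix.vecMulVec_apply, Matrix.one_apply, mul_comm]
  · intro x
    have hexp : star x ⬝ᵥ ((t • (1 : Matrix (Fin 2) (Fin 2) ℝ)
          - c • Matrix.vecMulVec (fun i => m i) fun i => m i) *ᵥ x)
        = t * (x 0 ^ 2 + x 1 ^ 2) - c * (m 0 * x 0 + m 1 * x 1) ^ 2 := by
      simp [dotProduct, Matrix.mulVec, Matrix.vecMulVec, Matrix.one_apply,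
        Fin.sum_univ_two, Matrix.sub_apply, Matrix.smul_apply]
      ring
    rw [hexp]
    have hCS : (m 0 * x 0 + m 1 * x 1) ^ 2 ≤ (m 0 ^ 2 + m 1 ^ 2) * (x 0 ^ 2 + x 1 ^ 2) := by
      nlinarith [sq_nonneg (m 0 * x 1 - m 1 * x 0)]
    have hX : (0:ℝ) ≤ x 0 ^ 2 + x 1 ^ 2 := by positivity
    clear_value r s D a c t
    clear heq h2 hχ hD hc ht hrdef hsdef hD0 key hm
    rw [hr2] at hCS
    have h3 := mul_le_mul_of_nonneg_left hCS hc0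
    have h4 := mul_le_mul_of_nonneg_right hkey hX
    have h5 : c * (r ^ 2 * (x 0 ^ 2 + x 1 ^ 2)) = c * r ^ 2 * (x 0 ^ 2 + x 1 ^ 2) := by ring
    linarith
end
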